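/- Let (e_i) be an unconditional basic sequence permutatively equivalent to all of its subsequences, witnessed by a permutation π of an infinite set B with (e_{π(i)})_{i∈B} subsymmetric. Then there exists an infinite A ⊆ B such that (e_i)_{i∈A} is subsymmetric: one can choose a strictly increasing enumeration n_0 < n_1 < … of elements of B with π(n_0) < π(n_1) < π(n_2) < …, and the corresponding subsequence is subsymmetric. -/

import Mathlib

open Filter

/-- The series `∑ u_i` converges (in norm). -/
def SeriesConv {E : Type*} [NormedAddCommGroup E] (u : ℕ → E) : Prop :=
  ∃ x : E, Tendsto (fun m => ∑ i ∈ Finset.range m, u i) atTop (nhds x)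

/-- Two sequences are equivalent if the same series of coefficients converge. -/
def Equiv' {E F : Type*} [NormedAddCommGroup E] [NormedSpace ℝ E]
    [NormedAddCommGroup F] [NormedSpace ℝ F] (u : ℕ → E) (v : ℕ → F) : Prop :=
  ∀ a : ℕ → ℝ, SeriesConv (fun i => a i • u i) ↔ SeriesConv (fun i => a i • v i)

/-- A sequence is subsymmetric if it is equivalent to all of its subsequences. -/
def Subsymmetric {E : Type*} [NormedAddCommGroup E] [NormedSpace ℝ E]
    (u : ℕ → E) : Prop :=
  ∀ n : ℕ → ℕ, StrictMono n → Equiv' u (u ∘ n)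

theorem subsymmetric_subsequence {E : Type*} [NormedAddCommGroup E]
    [NormedSpace ℝ E] (e : ℕ → E) (b : ℕ → ℕ) (hb : StrictMono b)
    (f : ℕ → ℕ) (hf : Function.Injective f) (hfB : Set.range f ⊆ Set.range b)
    (hsub : Subsymmetric (e ∘ f)) :
    ∃ k : ℕ → ℕ, StrictMono k ∧ StrictMono (f ∘ k) ∧ Subsymmetric (e ∘ f ∘ k) := by
  have htop : Tendsto f atTop atTop := by
    rw [← Nat.cofinite_eq_atTop]
    exact hf.tendsto_cofinite
  obtain ⟨k, hk, hfk⟩ := strictMono_subseq_of_tendsto_atTop htop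
  refine ⟨k, hk, hfk, ?_⟩
  intro n hn a
  have h1 := hsub k hk a
  have h2 := hsub (k ∘ n) (hk.comp hn) a
  exact h1.symm.trans h2
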